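/- Let $\mathcal{X}=(x_n)$ be a basis of a $p$-Banach space $\mathbb{X}$, $0<p\le1$, and suppose there exist $0<r<\infty$ and a constant $C$ such that $\|\sum_{n\in A}\varepsilon_n x_n\|\le C|A|^{1/r}$ for every finite $A\subseteq\mathbb{N}$ and all unimodular scalars $(\varepsilon_n)_{n\in A}$. Then the unit vector system of the Lorentz sequence space $\ell_{r,p}$ dominates $\mathcal{X}$: there is a constant $C'$ such that $\|\sum_n a_n x_n\|\le C'\|(a_n)\|_{\ell_{r,p}}$ for all finitely supported sequences $(a_n)$. -/

import Mathlib

open Finset Set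

/-- A (quasi-)basis of a quasi-Banach space: a quasi-norm `q` with modulus of
concavity `κ`, together with a norm-bounded biorthogonal system `(e, c)`. -/
structure QBasis (X : Type*) [AddCommGroup X] [Module ℝ X] where
  q : X → ℝ
  κ : ℝ
  one_le_κ : 1 ≤ κ
  q_nonneg : ∀ f, 0 ≤ q f
  q_eq_zero_iff : ∀ f, q f = 0 ↔ f = 0
  q_smul : ∀ (t : ℝ) (f : X), q (t • f) = |t| * q f
  q_add : ∀ f g, q (f + g) ≤ κ * (q f + q g)
  e : ℕ → X
  c : ℕ → X →ₗ[ℝ] ℝ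
  biorth : ∀ m n, c m (e n) = if m = n then (1 : ℝ) else 0
  e_bdd : ∃ M, ∀ n, q (e n) ≤ M
  c_bdd : ∃ M, ∀ n f, |c n f| ≤ M * q f

namespace QBasis

variable {X : Type*} [AddCommGroup X] [Module ℝ X] (B : QBasis X)

/-- Coordinate projection on a finite set `A`. -/
noncomputable def S (A : Finset ℕ) (f : X) : X := ∑ n ∈ A, B.c n f • B.e n

/-- The set `𝒬` of vectors with coefficients in the unit ball of `ℓ∞`. -/
def inQ (f : X) : Prop := ∀ n, |B.c n f| ≤ 1

/-- `A` is the set `A(a,f) = {n : |c n f| ≥ a}` of coefficients above the threshold `a`. -/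
def thrSet (a : ℝ) (f : X) (A : Finset ℕ) : Prop := ∀ n, n ∈ A ↔ a ≤ |B.c n f|

/-- `A` is a greedy set of `f`. -/
def greedySet (f : X) (A : Finset ℕ) : Prop :=
  ∀ n ∈ A, ∀ k, k ∉ A → |B.c k f| ≤ |B.c n f|

/-- The restricted truncation operator associated with a finite set `A`:
`R(f,A) = min_{n∈A} |c n f| ∑_{n∈A} sgn (c n f) • e n`. -/
noncomputable def R (A : Finset ℕ) (f : X) : X :=
  if h : A.Nonempty then
    (A.inf' h fun n => |B.c n f|) • ∑ n ∈ A, Real.sign (B.c n f) • B.e n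
  else 0

/-- `lam` is the nearly truncation quasi-greedy function of the basis: for every
`a ∈ (0,1)`, `lam a` is the smallest constant `C` with `q (R^{(a)} f) ≤ C * q f`
for all `f ∈ 𝒬`. -/
def NTQGFun (lam : ℝ → ℝ) : Prop :=
  ∀ a ∈ Set.Ioo (0 : ℝ) 1,
    (∀ f, B.inQ f → ∀ A : Finset ℕ, B.thrSet a f A → B.q (B.R A f) ≤ lam a * B.q f) ∧
    (∀ C : ℝ, (∀ f, B.inQ f → ∀ A : Finset ℕ, B.thrSet a f A → B.q (B.R A f) ≤ C * B.q f) →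
      lam a ≤ C)

/-- The basis is nearly truncation quasi-greedy. -/
def NearlyTQG : Prop :=
  ∀ a ∈ Set.Ioo (0 : ℝ) 1, ∃ C : ℝ,
    ∀ f, B.inQ f → ∀ A : Finset ℕ, B.thrSet a f A → B.q (B.R A f) ≤ C * B.q f

/-- The basis is nearly unconditional. -/
def NearlyUnconditional : Prop :=
  ∀ a ∈ Set.Ioo (0 : ℝ) 1, ∃ C : ℝ,
    ∀ f, B.inQ f → ∀ Aa A : Finset ℕ, B.thrSet a f Aa → A ⊆ Aa → B.q (B.S A f) ≤ C * B.q f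

/-- `phi` is the nearly unconditionality function: `phi a` is the smallest `C` with
`q (S_A f) ≤ C * q f` for `f ∈ 𝒬` and `A ⊆ A(a,f)`. -/
def NUFun (phi : ℝ → ℝ) : Prop :=
  ∀ a ∈ Set.Ioo (0 : ℝ) 1,
    (∀ f, B.inQ f → ∀ Aa A : Finset ℕ, B.thrSet a f Aa → A ⊆ Aa →
      B.q (B.S A f) ≤ phi a * B.q f) ∧
    (∀ C : ℝ, (∀ f, B.inQ f → ∀ Aa A : Finset ℕ, B.thrSet a f Aa → A ⊆ Aa →
      B.q (B.S A f) ≤ C * B.q f) → phi a ≤ C)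

/-- `theta` is the thresholding-boundedness function: `theta a` is the smallest `C` with
`q (S_{A(a,f)} f) ≤ C * q f` for `f ∈ 𝒬`. -/
def ThetaFun (theta : ℝ → ℝ) : Prop :=
  ∀ a ∈ Set.Ioo (0 : ℝ) 1,
    (∀ f, B.inQ f → ∀ A : Finset ℕ, B.thrSet a f A → B.q (B.S A f) ≤ theta a * B.q f) ∧
    (∀ C : ℝ, (∀ f, B.inQ f → ∀ A : Finset ℕ, B.thrSet a f A → B.q (B.S A f) ≤ C * B.q f) →
      theta a ≤ C)

/-- The basis is truncation quasi-greedy: the restricted truncation operators are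
uniformly bounded over greedy sets. -/
def TruncationQG : Prop :=
  ∃ C : ℝ, ∀ f (A : Finset ℕ), B.greedySet f A → B.q (B.R A f) ≤ C * B.q f

end QBasis

section Aux

variable {X : Type*} [AddCommGroup X] [Module ℝ X] (B : QBasis X)

lemma aux_q_zero : B.q 0 = 0 := (B.q_eq_zero_iff 0).mpr rfl

lemma aux_ptriangle {p : ℝ} (hp0 : 0 < p)
    (hpB : ∀ f g, B.q (f + g) ^ p ≤ B.q f ^ p + B.q g ^ p)
    {ι : Type*} (s : Finset ι) (g : ι → X) :
    B.q (∑ i ∈ s, g i) ^ p ≤ ∑ i ∈ s, B.q (g i) ^ p := by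
  classical
  induction s using Finset.induction_on with
  | empty => simp [aux_q_zero B, Real.zero_rpow hp0.ne']
  | insert _ _ h ih =>
    rw [Finset.sum_insert h, Finset.sum_insert h]
    exact le_trans (hpB _ _) (by gcongr)

lemma aux_C_pos {r C : ℝ}
    (hC : ∀ (A : Finset ℕ) (ε : ℕ → ℝ), (∀ n ∈ A, |ε n| = 1) →
      B.q (∑ n ∈ A, ε n • B.e n) ≤ C * (A.card : ℝ) ^ (1 / r)) : 0 < C := by
  have h1 := hC {0} (fun _ => 1) (by simp)
  simp at h1
  have he : B.e 0 ≠ 0 := by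
    intro h
    have := B.biorth 0 0
    simp [h] at this
  have hq : 0 < B.q (B.e 0) :=
    lt_of_le_of_ne (B.q_nonneg _) (fun h => he ((B.q_eq_zero_iff _).mp h.symm))
  linarith

lemma aux_unit_bound {p r C : ℝ} (hp0 : 0 < p)
    (hpB : ∀ f g, B.q (f + g) ^ p ≤ B.q f ^ p + B.q g ^ p)
    (hr : 0 < r)
    (hC : ∀ (A : Finset ℕ) (ε : ℕ → ℝ), (∀ n ∈ A, |ε n| = 1) →
      B.q (∑ n ∈ A, ε n • B.e n) ≤ C * (A.card : ℝ) ^ (1 / r))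
    (A : Finset ℕ) (c : ℕ → ℝ) (hc : ∀ n ∈ A, |c n| ≤ 1) :
    B.q (∑ n ∈ A, c n • B.e n) ^ p ≤
      C ^ p / ((2:ℝ) ^ p - 1) * (A.card : ℝ) ^ (p / r) := by
  classical
  have hCpos : 0 < C := aux_C_pos B hC
  obtain ⟨M0, hM0⟩ := B.e_bdd
  set Me : ℝ := max M0 0 with hMedef
  have hMe : ∀ n, B.q (B.e n) ≤ Me := fun n => (hM0 n).trans (le_max_left _ _)
  have hMenn : 0 ≤ Me := le_max_right _ _
  have htp : 1 < (2:ℝ) ^ p :=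
    (Real.one_lt_rpow_iff_of_pos (by norm_num)).mpr (Or.inl ⟨by norm_num, hp0⟩)
  have htpos : (0:ℝ) < (2:ℝ)^p := by linarith
  have hinv1 : ((2:ℝ)^p)⁻¹ < 1 := inv_lt_one_of_one_lt₀ htp
  set W : ℝ := C ^ p * (A.card : ℝ) ^ (p / r) with hWdef
  have hWnn : 0 ≤ W := by positivity
  have hWkey : ∀ (A' : Finset ℕ) (ε' : ℕ → ℝ), A' ⊆ A → (∀ n ∈ A', |ε' n| = 1) →
      B.q (∑ n ∈ A', ε' n • B.e n) ^ p ≤ W := by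
    intro A' ε' hsub hε'
    have h1 := hC A' ε' hε'
    have h2 : C * (A'.card:ℝ) ^ (1/r) ≤ C * (A.card:ℝ) ^ (1/r) := by
      apply mul_le_mul_of_nonneg_left _ hCpos.le
      exact Real.rpow_le_rpow (by positivity)
        (Nat.cast_le.mpr (Finset.card_le_card hsub)) (by positivity)
    have h3 := Real.rpow_le_rpow (B.q_nonneg _) (h1.trans h2) hp0.le
    calc B.q (∑ n ∈ A', ε' n • B.e n) ^ p ≤ (C * (A.card:ℝ)^(1/r))^p := h3
    _ = C^p * ((A.card:ℝ)^(1/r))^p := Real.mul_rpow hCpos.le (by positivity)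
    _ = C^p * (A.card:ℝ)^(p/r) := by
        rw [← Real.rpow_mul (by positivity), div_mul_eq_mul_div, one_mul]
  have main : ∀ M : ℕ, ∀ c : ℕ → ℝ, (∀ n ∈ A, |c n| ≤ 1) →
      B.q (∑ n ∈ A, c n • B.e n) ^ p ≤
        W / ((2:ℝ)^p - 1) + ((2:ℝ)^p)⁻¹ ^ M * ((A.card:ℝ) * Me ^ p) := by
    intro M
    induction M with
    | zero =>
      intro c hc
      simp only [pow_zero, one_mul]
      have h1 : B.q (∑ n ∈ A, c n • B.e n) ^ p ≤ ∑ n ∈ A, B.q (c n • B.e n) ^ p :=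
        aux_ptriangle B hp0 hpB _ _
      have h2 : ∀ n ∈ A, B.q (c n • B.e n) ^ p ≤ Me ^ p := by
        intro n hn
        rw [B.q_smul]
        have h3 : |c n| * B.q (B.e n) ≤ Me := by
          calc |c n| * B.q (B.e n) ≤ 1 * Me :=
            mul_le_mul (hc n hn) (hMe n) (B.q_nonneg _) zero_le_one
          _ = Me := one_mul _
        exact Real.rpow_le_rpow (mul_nonneg (abs_nonneg _) (B.q_nonneg _)) h3 hp0.le
      calc B.q (∑ n ∈ A, c n • B.e n) ^ p ≤ ∑ n ∈ A, B.q (c n • B.e n)^p := h1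
      _ ≤ ∑ _n ∈ A, Me^p := Finset.sum_le_sum h2
      _ = (A.card:ℝ) * Me^p := by rw [Finset.sum_const, nsmul_eq_mul]
      _ ≤ _ := le_add_of_nonneg_left (div_nonneg hWnn (by linarith))
    | succ M ih =>
      intro c hc
      set ε : ℕ → ℝ := fun n => if 0 ≤ c n then 1 else -1 with hεdef
      set d : ℕ → ℝ := fun n => if 1/2 ≤ |c n| then c n - ε n / 2 else c n with hddef
      have hdle : ∀ n ∈ A, |2 * d n| ≤ 1 := by
        intro n hn
        have h1 := abs_le.mp (hc n hn)
        simp only [hddef, hεdef]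
        split_ifs with h h2
        · rw [abs_of_nonneg h2] at h
          rw [abs_le]; constructor <;> linarith
        · rw [abs_of_neg (not_le.mp h2)] at h
          rw [abs_le]; constructor <;> linarith
        · push_neg at h; rw [abs_lt] at h
          rw [abs_le]; constructor <;> linarith
      have hsplit : (∑ n ∈ A, c n • B.e n) =
          ((1:ℝ)/2) • (∑ n ∈ A.filter (fun n => 1/2 ≤ |c n|), ε n • B.e n)
          + ((1:ℝ)/2) • (∑ n ∈ A, (2 * d n) • B.e n) := by
        rw [Finset.smul_sum, Finset.smul_sum, Finset.sum_filter, ← Finset.sum_add_distrib]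
        apply Finset.sum_congr rfl
        intro n _
        split_ifs with h
        · rw [smul_smul, smul_smul, ← add_smul]
          congr 1
          simp only [hddef, if_pos h]
          ring
        · rw [zero_add, smul_smul]
          congr 1
          simp only [hddef, if_neg h]
          ring
      have half_rpow : |(1:ℝ)/2| ^ p = ((2:ℝ)^p)⁻¹ := by
        rw [abs_of_pos (by norm_num : (0:ℝ) < 1/2), one_div, Real.inv_rpow (by norm_num)]
      have hε1 : ∀ n ∈ A.filter (fun n => 1/2 ≤ |c n|), |ε n| = 1 := by
        intro n _
        simp only [hεdef]
        split_ifs <;> norm_num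
      have hq1 : B.q (((1:ℝ)/2) • ∑ n ∈ A.filter (fun n => 1/2 ≤ |c n|), ε n • B.e n) ^ p
          ≤ ((2:ℝ)^p)⁻¹ * W := by
        rw [B.q_smul, Real.mul_rpow (abs_nonneg _) (B.q_nonneg _), half_rpow]
        exact mul_le_mul_of_nonneg_left (hWkey _ _ (Finset.filter_subset _ _) hε1)
          (by positivity)
      have hq2 : B.q (((1:ℝ)/2) • ∑ n ∈ A, (2 * d n) • B.e n) ^ p
          ≤ ((2:ℝ)^p)⁻¹ * (W / ((2:ℝ)^p - 1) + ((2:ℝ)^p)⁻¹ ^ M * ((A.card:ℝ) * Me ^ p)) := by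
        rw [B.q_smul, Real.mul_rpow (abs_nonneg _) (B.q_nonneg _), half_rpow]
        exact mul_le_mul_of_nonneg_left (ih (fun n => 2 * d n) hdle) (by positivity)
      have halg : ((2:ℝ)^p)⁻¹ * W + ((2:ℝ)^p)⁻¹ * (W / ((2:ℝ)^p - 1)) = W / ((2:ℝ)^p - 1) := by
        have h1 : ((2:ℝ)^p) ≠ 0 := ne_of_gt htpos
        have h2 : ((2:ℝ)^p) - 1 ≠ 0 := by linarith
        field_simp
        ring
      rw [hsplit]
      refine le_trans (hpB _ _) ?_
      calc B.q (((1:ℝ)/2) • ∑ n ∈ A.filter (fun n => 1/2 ≤ |c n|), ε n • B.e n) ^ p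
            + B.q (((1:ℝ)/2) • ∑ n ∈ A, (2 * d n) • B.e n) ^ p
          ≤ ((2:ℝ)^p)⁻¹ * W + ((2:ℝ)^p)⁻¹ * (W / ((2:ℝ)^p - 1)
            + ((2:ℝ)^p)⁻¹ ^ M * ((A.card:ℝ) * Me ^ p)) := add_le_add hq1 hq2
        _ = (((2:ℝ)^p)⁻¹ * W + ((2:ℝ)^p)⁻¹ * (W / ((2:ℝ)^p - 1)))
            + ((2:ℝ)^p)⁻¹ ^ (M+1) * ((A.card:ℝ) * Me ^ p) := by ring
        _ = _ := by rw [halg]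
  have hgoal : C ^ p / ((2:ℝ)^p - 1) * (A.card:ℝ)^(p/r) = W / ((2:ℝ)^p - 1) := by
    rw [hWdef]; ring
  rw [hgoal]
  refine le_of_forall_pos_le_add ?_
  intro δ hδ
  have hXnn : (0:ℝ) ≤ (A.card:ℝ) * Me ^ p := by positivity
  obtain ⟨M, hM⟩ : ∃ M : ℕ, ((2:ℝ)^p)⁻¹ ^ M * ((A.card:ℝ) * Me ^ p) ≤ δ := by
    rcases eq_or_lt_of_le hXnn with h0 | h0
    · exact ⟨0, by rw [← h0, mul_zero]; exact hδ.le⟩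
    · obtain ⟨M, hM⟩ := exists_pow_lt_of_lt_one (div_pos hδ h0) hinv1
      exact ⟨M, le_of_lt ((lt_div_iff₀ h0).mp hM)⟩
  calc B.q (∑ n ∈ A, c n • B.e n) ^ p
      ≤ W / ((2:ℝ)^p - 1) + ((2:ℝ)^p)⁻¹ ^ M * ((A.card:ℝ) * Me ^ p) := main M c hc
    _ ≤ W / ((2:ℝ)^p - 1) + δ := by linarith

lemma aux_scaled_bound {p r C : ℝ} (hp0 : 0 < p)
    (hpB : ∀ f g, B.q (f + g) ^ p ≤ B.q f ^ p + B.q g ^ p)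
    (hr : 0 < r)
    (hC : ∀ (A : Finset ℕ) (ε : ℕ → ℝ), (∀ n ∈ A, |ε n| = 1) →
      B.q (∑ n ∈ A, ε n • B.e n) ≤ C * (A.card : ℝ) ^ (1 / r))
    (A : Finset ℕ) (c : ℕ → ℝ) (β : ℝ) (hβ : 0 ≤ β)
    (hc : ∀ n ∈ A, |c n| ≤ β) :
    B.q (∑ n ∈ A, c n • B.e n) ^ p ≤
      C ^ p / ((2:ℝ) ^ p - 1) * β ^ p * (A.card : ℝ) ^ (p / r) := by
  have htp : 1 < (2:ℝ) ^ p :=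
    (Real.one_lt_rpow_iff_of_pos (by norm_num)).mpr (Or.inl ⟨by norm_num, hp0⟩)
  have hCpos : 0 < C := aux_C_pos B hC
  rcases eq_or_lt_of_le hβ with h0 | h0
  · have hz : ∀ n ∈ A, c n • B.e n = (0:X) := by
      intro n hn
      have : c n = 0 := abs_eq_zero.mp (le_antisymm (h0 ▸ hc n hn) (abs_nonneg _))
      simp [this]
    rw [Finset.sum_congr rfl hz, Finset.sum_const, smul_zero, aux_q_zero B,
      Real.zero_rpow hp0.ne']
    have h1 : (0:ℝ) ≤ C ^ p / ((2:ℝ)^p - 1) := div_nonneg (by positivity) (by linarith)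
    have h2 : (0:ℝ) ≤ β ^ p := Real.rpow_nonneg hβ p
    positivity
  · have hunit := aux_unit_bound B hp0 hpB hr hC A (fun n => c n / β)
      (fun n hn => by
        rw [abs_div, abs_of_pos h0]
        exact div_le_one_of_le₀ (hc n hn) h0.le)
    have hsum : ∑ n ∈ A, c n • B.e n = β • ∑ n ∈ A, (c n / β) • B.e n := by
      rw [Finset.smul_sum]
      apply Finset.sum_congr rfl
      intro n _
      rw [smul_smul]
      congr 1
      field_simp
    rw [hsum, B.q_smul, abs_of_pos h0, Real.mul_rpow h0.le (B.q_nonneg _)]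
    calc β^p * B.q (∑ n ∈ A, (c n / β) • B.e n) ^ p
        ≤ β^p * (C^p/((2:ℝ)^p-1) * (A.card:ℝ)^(p/r)) :=
          mul_le_mul_of_nonneg_left hunit (by positivity)
      _ = _ := by ring

end Aux

/-- if `X` is `p`-Banach, `0 < p ≤ 1`, and
`‖∑_{n∈A} ε_n e_n‖ ≤ C |A|^{1/r}` for all finite `A` and signs `ε`, then the unit
vector system of the Lorentz space `ℓ_{r,p}` dominates the basis.  The Lorentz
quasi-norm is written using a non-increasing enumeration `σ : Fin m → ℕ` of the
support of the finitely supported sequence `a`. -/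
theorem stmt10 {X : Type*} [AddCommGroup X] [Module ℝ X] (B : QBasis X)
    (p : ℝ) (hp0 : 0 < p) (hp1 : p ≤ 1)
    (hpB : ∀ f g, B.q (f + g) ^ p ≤ B.q f ^ p + B.q g ^ p)
    (r : ℝ) (hr : 0 < r) (C : ℝ)
    (hC : ∀ (A : Finset ℕ) (ε : ℕ → ℝ), (∀ n ∈ A, |ε n| = 1) →
      B.q (∑ n ∈ A, ε n • B.e n) ≤ C * (A.card : ℝ) ^ (1 / r)) :
    ∃ C' : ℝ, 0 < C' ∧ ∀ (m : ℕ) (σ : Fin m → ℕ) (a : ℕ → ℝ),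
      Function.Injective σ →
      (∀ i j : Fin m, i ≤ j → |a (σ j)| ≤ |a (σ i)|) →
      (∀ n : ℕ, a n ≠ 0 → n ∈ Set.range σ) →
      B.q (∑ i : Fin m, a (σ i) • B.e (σ i)) ≤
        C' * (∑ i : Fin m, |a (σ i)| ^ p * ((i : ℝ) + 1) ^ (p / r - 1)) ^ (1 / p) := by
  classical
  have hCpos : 0 < C := aux_C_pos B hC
  have htp : 1 < (2:ℝ)^p :=
    (Real.one_lt_rpow_iff_of_pos (by norm_num)).mpr (Or.inl ⟨by norm_num, hp0⟩)
  set D : ℝ := C ^ p / ((2:ℝ)^p - 1) with hDdef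
  have hDpos : 0 < D := div_pos (Real.rpow_pos_of_pos hCpos p) (by linarith)
  set E : ℝ := 2 * (2:ℝ)^(p/r) with hEdef
  have hEpos : 0 < E := by
    rw [hEdef]; positivity
  set Ct : ℝ := D * (1 + E) with hCtdef
  have hCtpos : 0 < Ct := by
    rw [hCtdef]; exact mul_pos hDpos (by linarith)
  refine ⟨Ct ^ (1/p), Real.rpow_pos_of_pos hCtpos _, ?_⟩
  intro m σ a hinj hmono _hsupp
  set g : Fin m → ℝ := fun i => |a (σ i)| ^ p * ((i : ℝ) + 1) ^ (p / r - 1) with hgdef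
  have hgnn : ∀ i, 0 ≤ g i := fun i =>
    mul_nonneg (Real.rpow_nonneg (abs_nonneg _) _) (Real.rpow_nonneg (by positivity) _)
  have hRnn : 0 ≤ ∑ i : Fin m, g i := Finset.sum_nonneg fun i _ => hgnn i
  have key : B.q (∑ i : Fin m, a (σ i) • B.e (σ i)) ^ p ≤ Ct * ∑ i : Fin m, g i := by
    rcases Nat.eq_zero_or_pos m with hm | hm
    · subst hm
      simp [aux_q_zero B, Real.zero_rpow hp0.ne']
    · set blk : Fin m → ℕ := fun i => Nat.log 2 (i.val + 1) with hblkdef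
      have hblk_lt : ∀ i : Fin m, blk i < m := by
        intro i
        have h1 : Nat.log 2 (i.val + 1) < i.val + 1 := Nat.log_lt_self 2 (Nat.succ_ne_zero _)
        have h2 := i.isLt
        simp only [hblkdef]
        omega
      have hblk_low : ∀ i : Fin m, 2 ^ (blk i) ≤ i.val + 1 := fun i =>
        Nat.pow_log_le_self 2 (Nat.succ_ne_zero _)
      have hblk_high : ∀ i : Fin m, i.val + 1 < 2 ^ (blk i + 1) := fun i =>
        Nat.lt_pow_succ_log_self (by norm_num) _
      set J : ℕ → Finset (Fin m) := fun k => Finset.univ.filter (fun i => blk i = k) with hJdef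
      have hJmem : ∀ k, ∀ i : Fin m, i ∈ J k ↔ blk i = k := by
        intro k i
        simp [hJdef]
      have hidx : ∀ k : ℕ, min (2^k - 1) (m - 1) < m := fun k => by omega
      set idx : ℕ → Fin m := fun k => ⟨min (2^k - 1) (m-1), hidx k⟩ with hidxdef
      have hidxval : ∀ k, (idx k).val = min (2^k - 1) (m-1) := fun k => rfl
      set β : ℕ → ℝ := fun k => |a (σ (idx k))| with hβdef
      have hβnn : ∀ k, 0 ≤ β k := fun k => abs_nonneg _
      have hcoef : ∀ k, ∀ i ∈ J k, |a (σ i)| ≤ β k := by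
        intro k i hi
        rw [hJmem] at hi
        have h1 := hblk_low i
        rw [hi] at h1
        have h2 := i.isLt
        apply hmono (idx k) i
        rw [Fin.le_def, hidxval]
        omega
      have hcard : ∀ k, (J k).card ≤ 2^k := by
        intro k
        have h1 : ∀ i ∈ J k, i.val ∈ Finset.Ico (2^k - 1) (2^(k+1) - 1) := by
          intro i hi
          rw [hJmem] at hi
          have h1 := hblk_low i; have h2 := hblk_high i
          rw [hi] at h1 h2
          simp only [Finset.mem_Ico]
          omega
        have h2 := Finset.card_le_card_of_injOn (fun i => i.val) (fun i hi => h1 i hi)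
          (fun i _ j _ h => Fin.ext h)
        rw [Nat.card_Ico] at h2
        have h3 : 2^(k+1) = 2 * 2^k := by ring
        omega
      set T : ℕ → ℝ := fun k =>
        if (J k).Nonempty then β k ^ p * (((2:ℝ)^k) ^ (p/r)) else 0 with hTdef
      have hblock : ∀ k, B.q (∑ i ∈ J k, a (σ i) • B.e (σ i)) ^ p ≤ D * T k := by
        intro k
        by_cases hne : (J k).Nonempty
        · have himg : ∑ i ∈ J k, a (σ i) • B.e (σ i) = ∑ n ∈ (J k).image σ, a n • B.e n :=
            (Finset.sum_image (f := fun n => a n • B.e n) (fun i _ j _ h => hinj h)).symm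
          rw [himg]
          have hb := aux_scaled_bound B hp0 hpB hr hC ((J k).image σ) a (β k) (hβnn k)
            (by
              intro n hn
              obtain ⟨i, hi, rfl⟩ := Finset.mem_image.mp hn
              exact hcoef k i hi)
          rw [Finset.card_image_of_injective _ hinj, ← hDdef] at hb
          refine hb.trans ?_
          simp only [hTdef]
          rw [if_pos hne]
          have hle : ((J k).card : ℝ) ^ (p/r) ≤ ((2:ℝ)^k) ^ (p/r) := by
            apply Real.rpow_le_rpow (by positivity) _ ((div_pos hp0 hr).le)
            exact_mod_cast hcard k
          calc D * β k ^ p * ((J k).card : ℝ)^(p/r)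
              ≤ D * β k ^ p * ((2:ℝ)^k)^(p/r) := by
                apply mul_le_mul_of_nonneg_left hle
                exact mul_nonneg hDpos.le (Real.rpow_nonneg (hβnn k) _)
            _ = D * (β k ^ p * ((2:ℝ)^k)^(p/r)) := by ring
        · rw [Finset.not_nonempty_iff_eq_empty.mp hne, Finset.sum_empty, aux_q_zero B,
            Real.zero_rpow hp0.ne']
          simp only [hTdef]
          rw [if_neg hne, mul_zero]
      have hdecomp : (∑ i : Fin m, a (σ i) • B.e (σ i))
          = ∑ k ∈ Finset.range m, ∑ i ∈ J k, a (σ i) • B.e (σ i) := by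
        simp only [hJdef]
        exact (Finset.sum_fiberwise_of_maps_to
          (fun i _ => Finset.mem_range.mpr (hblk_lt i)) _).symm
      have hgdecomp : ∑ i : Fin m, g i = ∑ k ∈ Finset.range m, ∑ i ∈ J k, g i := by
        simp only [hJdef]
        exact (Finset.sum_fiberwise_of_maps_to
          (fun i _ => Finset.mem_range.mpr (hblk_lt i)) _).symm
      have hsum1 : B.q (∑ i : Fin m, a (σ i) • B.e (σ i)) ^ p
          ≤ D * ∑ k ∈ Finset.range m, T k := by
        rw [hdecomp, Finset.mul_sum]
        exact (aux_ptriangle B hp0 hpB _ _).trans (Finset.sum_le_sum (fun k _ => hblock k))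
      have hidx0 : idx 0 = ⟨0, hm⟩ := by
        apply Fin.ext
        rw [hidxval]
        simp only [pow_zero]
        omega
      have hT0 : T 0 ≤ ∑ i ∈ J 0, g i := by
        by_cases hne : (J 0).Nonempty
        · simp only [hTdef]
          rw [if_pos hne]
          have h0mem : (⟨0, hm⟩ : Fin m) ∈ J 0 := by
            rw [hJmem]
            simp only [hblkdef]
            norm_num
          have hβ0 : β 0 ^ p * (((2:ℝ)^0)^(p/r)) = g ⟨0, hm⟩ := by
            simp only [hβdef, hgdef, hidx0, pow_zero, Real.one_rpow, mul_one]
            norm_num [Real.one_rpow]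
          rw [hβ0]
          exact Finset.single_le_sum (fun i _ => hgnn i) h0mem
        · simp only [hTdef]
          rw [if_neg hne]
          exact Finset.sum_nonneg fun i _ => hgnn i
      have hTk : ∀ k : ℕ, T (k+1) ≤ E * ∑ i ∈ J k, g i := by
        intro k
        by_cases hne : (J (k+1)).Nonempty
        · obtain ⟨i0, hi0⟩ := hne
          rw [hJmem] at hi0
          have hm2 : 2^(k+1) ≤ m := by
            have h1 := hblk_low i0
            rw [hi0] at h1
            have h2 := i0.isLt
            omega
          set L : ℝ := β (k+1) ^ p * (((2:ℝ)^k)^(p/r)) / ((2:ℝ)^(k+1)) with hLdef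
          have hLnn : 0 ≤ L := by
            rw [hLdef]
            apply div_nonneg _ (by positivity)
            exact mul_nonneg (Real.rpow_nonneg (hβnn _) _) (Real.rpow_nonneg (by positivity) _)
          have hglb : ∀ i ∈ J k, L ≤ g i := by
            intro i hi
            rw [hJmem] at hi
            have h1 := hblk_low i; have h2 := hblk_high i
            rw [hi] at h1 h2
            have him := i.isLt
            have hβle : β (k+1) ≤ |a (σ i)| := by
              apply hmono i (idx (k+1))
              rw [Fin.le_def, hidxval]
              omega
            have hβp : β (k+1) ^ p ≤ |a (σ i)| ^ p :=
              Real.rpow_le_rpow (hβnn _) hβle hp0.le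
            have hx0 : (0:ℝ) < (i.val:ℝ) + 1 := by positivity
            have hxl : ((2:ℝ))^k ≤ (i.val:ℝ) + 1 := by exact_mod_cast h1
            have hxh : (i.val:ℝ) + 1 ≤ (2:ℝ)^(k+1) := by exact_mod_cast h2.le
            have hrp : ((2:ℝ)^k)^(p/r) / ((2:ℝ)^(k+1)) ≤ ((i.val:ℝ)+1)^(p/r - 1) := by
              rw [Real.rpow_sub hx0, Real.rpow_one]
              exact div_le_div₀ (Real.rpow_nonneg hx0.le _)
                (Real.rpow_le_rpow (by positivity) hxl ((div_pos hp0 hr).le)) hx0 hxh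
            calc L ≤ |a (σ i)| ^ p * (((2:ℝ)^k)^(p/r) / ((2:ℝ)^(k+1))) := by
                  rw [hLdef, mul_div_assoc]
                  exact mul_le_mul_of_nonneg_right hβp
                    (div_nonneg (Real.rpow_nonneg (by positivity) _) (by positivity))
              _ ≤ |a (σ i)| ^ p * (((i.val:ℝ)+1)^(p/r-1)) :=
                  mul_le_mul_of_nonneg_left hrp (Real.rpow_nonneg (abs_nonneg _) _)
              _ = g i := by simp only [hgdef]
          have hcardlb : (2^k : ℕ) ≤ (J k).card := by
            have hsub : Finset.Ico (2^k - 1) (2^(k+1) - 1) ⊆ (J k).image (fun i => i.val) := by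
              intro v hv
              rw [Finset.mem_Ico] at hv
              have h6 : 2^(k+1) = 2 * 2^k := by ring
              have h7 : 1 ≤ 2^k := Nat.one_le_two_pow
              have hvm : v < m := by omega
              refine Finset.mem_image.mpr ⟨⟨v, hvm⟩, ?_, rfl⟩
              rw [hJmem]
              simp only [hblkdef]
              exact Nat.log_eq_of_pow_le_of_lt_pow (by omega) (by omega)
            have h4 := Finset.card_le_card hsub
            rw [Nat.card_Ico] at h4
            have h5 := Finset.card_image_le (s := J k) (f := fun i => i.val)
            have h6 : 2^(k+1) = 2 * 2^k := by ring
            have h7 : 1 ≤ 2^k := Nat.one_le_two_pow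
            omega
          have hsumlb : ((2^k : ℕ) : ℝ) * L ≤ ∑ i ∈ J k, g i := by
            have h1 := Finset.card_nsmul_le_sum (J k) g L hglb
            rw [nsmul_eq_mul] at h1
            calc ((2^k:ℕ):ℝ) * L ≤ ((J k).card : ℝ) * L :=
                mul_le_mul_of_nonneg_right (Nat.cast_le.mpr hcardlb) hLnn
              _ ≤ _ := h1
          have hne' : (J (k+1)).Nonempty := ⟨i0, (hJmem _ _).mpr hi0⟩
          simp only [hTdef]
          rw [if_pos hne']
          have hfinal : β (k+1) ^ p * (((2:ℝ)^(k+1))^(p/r)) = E * (((2^k:ℕ):ℝ) * L) := by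
            rw [hLdef, hEdef, pow_succ, Real.mul_rpow (by positivity) (by norm_num)]
            push_cast
            have h8 : ((2:ℝ)^k) ≠ 0 := by positivity
            field_simp
          rw [hfinal]
          exact mul_le_mul_of_nonneg_left hsumlb hEpos.le
        · simp only [hTdef]
          rw [if_neg hne]
          exact mul_nonneg hEpos.le (Finset.sum_nonneg fun i _ => hgnn i)
      have hcount : ∑ k ∈ Finset.range m, T k ≤ (1 + E) * ∑ i : Fin m, g i := by
        rw [Finset.range_eq_Ico, Finset.sum_eq_sum_Ico_succ_bot hm]
        have h2 : ∑ k ∈ Finset.Ico 1 m, T k ≤ E * ∑ i : Fin m, g i := by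
          rw [Finset.sum_Ico_eq_sum_range]
          calc ∑ j ∈ Finset.range (m-1), T (1+j)
              ≤ ∑ j ∈ Finset.range (m-1), E * ∑ i ∈ J j, g i := by
                apply Finset.sum_le_sum
                intro j _
                rw [add_comm]
                exact hTk j
            _ ≤ ∑ j ∈ Finset.range m, E * ∑ i ∈ J j, g i := by
                apply Finset.sum_le_sum_of_subset_of_nonneg
                  (Finset.range_subset_range.mpr (by omega))
                intro j _ _
                exact mul_nonneg hEpos.le (Finset.sum_nonneg fun i _ => hgnn i)
            _ = E * ∑ j ∈ Finset.range m, ∑ i ∈ J j, g i := (Finset.mul_sum _ _ _).symm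
            _ = E * ∑ i : Fin m, g i := by rw [← hgdecomp]
        have h1 : T 0 ≤ ∑ i : Fin m, g i :=
          hT0.trans (Finset.sum_le_sum_of_subset_of_nonneg (Finset.subset_univ _)
            (fun i _ _ => hgnn i))
        rw [add_mul, one_mul]
        exact add_le_add h1 h2
      calc B.q (∑ i : Fin m, a (σ i) • B.e (σ i)) ^ p
          ≤ D * ∑ k ∈ Finset.range m, T k := hsum1
        _ ≤ D * ((1+E) * ∑ i : Fin m, g i) := mul_le_mul_of_nonneg_left hcount hDpos.le
        _ = Ct * ∑ i : Fin m, g i := by rw [hCtdef]; ring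
  have hQnn := B.q_nonneg (∑ i : Fin m, a (σ i) • B.e (σ i))
  have h1 : B.q (∑ i : Fin m, a (σ i) • B.e (σ i))
      = (B.q (∑ i : Fin m, a (σ i) • B.e (σ i)) ^ p) ^ (1/p) := by
    rw [← Real.rpow_mul hQnn, mul_one_div, div_self hp0.ne', Real.rpow_one]
  rw [h1]
  calc (B.q (∑ i : Fin m, a (σ i) • B.e (σ i)) ^ p) ^ (1/p)
      ≤ (Ct * ∑ i : Fin m, g i) ^ (1/p) :=
        Real.rpow_le_rpow (Real.rpow_nonneg hQnn p) key (by positivity)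
    _ = Ct ^ (1/p) * (∑ i : Fin m, g i) ^ (1/p) := Real.mul_rpow hCtpos.le hRnn
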